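/- Let $\hat{\gamma} \sim \mathrm{N}(\gamma, \sigma_X^2)$ and $\hat{\Gamma} \sim \mathrm{N}(\beta\gamma, \sigma_Y^2)$ be independent with $\sigma_X, \sigma_Y > 0$ (the model with parameters $(\beta, \gamma)$ and $\Gamma = \beta\gamma$). Define the score of $\beta$ as $S(\beta, \gamma) = \gamma(\hat{\Gamma} - \beta\gamma)/\sigma_Y^2$ and $W(\beta) = \hat{\gamma}/\sigma_X^2 + \beta\hat{\Gamma}/\sigma_Y^2$. Then the conditional score satisfies, almost surely, $S(\beta, \gamma) - \mathbb{E}[S(\beta, \gamma) \mid W(\beta)] = \gamma(\hat{\Gamma} - \beta\hat{\gamma}) / (\beta^2\sigma_X^2 + \sigma_Y^2)$. -/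

import Mathlib

open MeasureTheory ProbabilityTheory
open scoped ENNReal NNReal

section Helpers
open Real

lemma gr_coe {v : ℝ} (hv : 0 < v) : ((Real.toNNReal v : ℝ≥0) : ℝ) = v :=
  Real.coe_toNNReal v hv.le

lemma gr_ne {v : ℝ} (hv : 0 < v) : Real.toNNReal v ≠ 0 := by
  simp [Real.toNNReal_eq_zero, not_le, hv]

lemma integral_gaussianReal_eq {m v : ℝ} (hv : 0 < v) (f : ℝ → ℝ) :
    ∫ x, f x ∂(gaussianReal m (Real.toNNReal v))
      = ∫ x, gaussianPDFReal m (Real.toNNReal v) x * f x := by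
  rw [gaussianReal_of_var_ne_zero m (gr_ne hv)]
  have h : (gaussianPDF m (Real.toNNReal v))
      = fun x => ((Real.toNNReal (gaussianPDFReal m (Real.toNNReal v) x) : ℝ≥0) : ℝ≥0∞) := rfl
  rw [h, integral_withDensity_eq_integral_smul
    ((measurable_gaussianPDFReal _ _).real_toNNReal) f]
  congr 1 with x
  simp [NNReal.smul_def, Real.coe_toNNReal _ (gaussianPDFReal_nonneg _ _ x)]

lemma integral_comp_affine (g : ℝ → ℝ) {D : ℝ} (hD : D ≠ 0) (e : ℝ) :
    ∫ x, g (D * x + e) = |D|⁻¹ * ∫ x, g x := by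
  have h1 : (∫ x, (fun t => g (t + e)) (D * x)) = |D⁻¹| • ∫ t, g (t + e) :=
    Measure.integral_comp_mul_left (fun t => g (t + e)) D
  simpa [integral_add_right_eq_self (μ := volume) g e, abs_inv, smul_eq_mul] using h1

lemma integrable_comp_affine {g : ℝ → ℝ} (hg : Integrable g) {D : ℝ} (hD : D ≠ 0) (e : ℝ) :
    Integrable (fun x => g (D * x + e)) :=
  (hg.comp_add_right e).comp_mul_left' hD

lemma integrable_id_mul_gaussianPDFReal (m : ℝ) {v : ℝ} (hv : 0 < v) :
    Integrable (fun x => x * gaussianPDFReal m (Real.toNNReal v) x) := by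
  have hb : 0 < (2*v)⁻¹ := by positivity
  have key1 : Integrable (fun y : ℝ => y * Real.exp (-(2*v)⁻¹ * y^2)) := by
    have := integrable_rpow_mul_exp_neg_mul_sq hb (s := 1) (by norm_num)
    simpa [Real.rpow_one] using this
  have key2 : Integrable (fun y : ℝ => m * Real.exp (-(2*v)⁻¹ * y^2)) :=
    (integrable_exp_neg_mul_sq hb).const_mul m
  have key : Integrable (fun y : ℝ => (y + m) * Real.exp (-(2*v)⁻¹ * y^2)) := by
    have h := key1.add key2
    refine h.congr (Filter.Eventually.of_forall fun y => ?_)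
    simp only [Pi.add_apply]; ring
  have h := (key.comp_sub_right m).const_mul (√(2*π*v))⁻¹
  refine h.congr (Filter.Eventually.of_forall fun x => ?_)
  simp only [ProbabilityTheory.gaussianPDFReal_def, gr_coe hv]
  have harg : -(2*v)⁻¹ * (x - m)^2 = -(x-m)^2/(2*v) := by
    field_simp
  rw [harg]
  ring

lemma integrable_id_gaussianReal (m : ℝ) {v : ℝ} (hv : 0 < v) :
    Integrable (fun x : ℝ => x) (gaussianReal m (Real.toNNReal v)) := by
  rw [gaussianReal_of_var_ne_zero _ (gr_ne hv),
    integrable_withDensity_iff (measurable_gaussianPDF _ _)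
      (Filter.Eventually.of_forall fun x => ENNReal.ofReal_lt_top)]
  refine (integrable_id_mul_gaussianPDFReal m hv).congr
    (Filter.Eventually.of_forall fun x => ?_)
  simp only [ProbabilityTheory.gaussianPDF_def, ENNReal.toReal_ofReal (gaussianPDFReal_nonneg _ _ x)]

lemma integral_id_mul_centered_gaussianPDFReal (v : ℝ≥0) :
    ∫ x, x * gaussianPDFReal 0 v x = 0 := by
  have heven : ∀ x : ℝ, gaussianPDFReal 0 v (-x) = gaussianPDFReal 0 v x := by
    intro x; simp [gaussianPDFReal, neg_sq]
  have h := integral_neg_eq_self (fun x : ℝ => x * gaussianPDFReal 0 v x) volume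
  simp only [heven, neg_mul] at h
  rw [integral_neg] at h
  linarith

lemma gauss_factor {β v1 v2 : ℝ} (h1 : 0 < v1) (h2 : 0 < v2) (m1 x v : ℝ) :
    gaussianPDFReal m1 (Real.toNNReal v1) x
      * gaussianPDFReal (β*m1) (Real.toNNReal v2) (v + β*x)
    = (1/v1 + β^2/v2) *
      (gaussianPDFReal ((1/v1 + β^2/v2)*m1) (Real.toNNReal (1/v1 + β^2/v2))
          ((1/v1 + β^2/v2)*x + (β/v2)*v)
        * gaussianPDFReal 0 (Real.toNNReal (v2 + β^2*v1)) v) := by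
  have hD : 0 < 1/v1 + β^2/v2 := by positivity
  have hsV : 0 < v2 + β^2*v1 := by positivity
  simp only [gaussianPDFReal_def, gr_coe h1, gr_coe h2, gr_coe hD, gr_coe hsV]
  rw [mul_mul_mul_comm, ← Real.exp_add, mul_mul_mul_comm ((√(2*π*(1/v1 + β^2/v2)))⁻¹),
    ← Real.exp_add, ← mul_assoc]
  have hconst : (√(2*π*v1))⁻¹ * (√(2*π*v2))⁻¹
      = (1/v1 + β^2/v2) * ((√(2*π*(1/v1 + β^2/v2)))⁻¹ * (√(2*π*(v2 + β^2*v1)))⁻¹) := by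
    rw [← mul_inv, ← mul_inv, ← Real.sqrt_mul (by positivity), ← Real.sqrt_mul (by positivity)]
    have hBA : 2*π*(1/v1 + β^2/v2) * (2*π*(v2 + β^2*v1))
        = (1/v1 + β^2/v2)^2 * (2*π*v1 * (2*π*v2)) := by
      field_simp
    rw [hBA, Real.sqrt_mul (sq_nonneg (1/v1 + β^2/v2)) (2*π*v1 * (2*π*v2)), Real.sqrt_sq hD.le, mul_inv]
    field_simp
  have hexp : -(x - m1)^2/(2*v1) + -(v + β*x - β*m1)^2/(2*v2)
      = -((1/v1 + β^2/v2)*x + (β/v2)*v - (1/v1 + β^2/v2)*m1)^2/(2*(1/v1 + β^2/v2))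
        + -(v - 0)^2/(2*(v2 + β^2*v1)) := by
    field_simp
    ring
  rw [hexp, hconst]

lemma key_integral {β v1 v2 : ℝ} (h1 : 0 < v1) (h2 : 0 < v2) (m1 : ℝ)
    {B : Set ℝ} (hB : MeasurableSet B) :
    ∫ p : ℝ × ℝ, (p.2 - β * p.1) * Set.indicator B (fun _ => (1:ℝ)) (p.1/v1 + β*p.2/v2)
      ∂((gaussianReal m1 (Real.toNNReal v1)).prod (gaussianReal (β*m1) (Real.toNNReal v2))) = 0 := by
  have hD : 0 < 1/v1 + β^2/v2 := by positivity
  have hsV : 0 < v2 + β^2*v1 := by positivity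
  set ν1 := gaussianReal m1 (Real.toNNReal v1) with hν1
  set ν2 := gaussianReal (β*m1) (Real.toNNReal v2) with hν2
  set p1 : ℝ → ℝ := gaussianPDFReal m1 (Real.toNNReal v1) with hp1
  set p2 : ℝ → ℝ := gaussianPDFReal (β*m1) (Real.toNNReal v2) with hp2
  set pW : ℝ → ℝ := gaussianPDFReal ((1/v1 + β^2/v2)*m1) (Real.toNNReal (1/v1 + β^2/v2)) with hpW
  set pV : ℝ → ℝ := gaussianPDFReal 0 (Real.toNNReal (v2 + β^2*v1)) with hpV
  set ind : ℝ → ℝ := Set.indicator B (fun _ => (1:ℝ)) with hind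
  set F : ℝ × ℝ → ℝ := fun p => (p.2 - β*p.1) * ind (p.1/v1 + β*p.2/v2) with hF
  set G : ℝ → ℝ := fun t => ind t * pW t with hG
  set H : ℝ → ℝ → ℝ :=
    fun x v => (v * ((1/v1+β^2/v2) * pV v)) * G ((1/v1+β^2/v2)*x + (β/v2)*v) with hH
  -- basic facts
  have hind_meas : Measurable ind := measurable_const.indicator hB
  have hind_nonneg : ∀ t, 0 ≤ ind t := fun t => Set.indicator_nonneg (fun _ _ => zero_le_one) t
  have hind_le : ∀ t, ind t ≤ 1 := fun t => Set.indicator_le_self' (fun _ _ => zero_le_one) t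
  have hpV_nonneg : ∀ t, 0 ≤ pV t := fun t => gaussianPDFReal_nonneg _ _ t
  have hpW_nonneg : ∀ t, 0 ≤ pW t := fun t => gaussianPDFReal_nonneg _ _ t
  have hpW_meas : Measurable pW := measurable_gaussianPDFReal _ _
  have hpV_meas : Measurable pV := measurable_gaussianPDFReal _ _
  -- measurability of F
  have hFmeas : Measurable F := by
    exact (measurable_snd.sub (measurable_fst.const_mul β)).mul
      (hind_meas.comp ((measurable_fst.div_const v1).add
        ((measurable_snd.const_mul β).div_const v2)))
  -- integrability of F
  have hf1 : Integrable (fun p : ℝ × ℝ => p.1) (ν1.prod ν2) := by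
    have hmap : (ν1.prod ν2).map Prod.fst = ν1 := by
      rw [Measure.map_fst_prod]; simp
    have h' : Integrable (id : ℝ → ℝ) ((ν1.prod ν2).map Prod.fst) := by
      rw [hmap, hν1]; exact integrable_id_gaussianReal m1 h1
    exact (integrable_map_measure aestronglyMeasurable_id
      measurable_fst.aemeasurable).mp h'
  have hf2 : Integrable (fun p : ℝ × ℝ => p.2) (ν1.prod ν2) := by
    have hmap : (ν1.prod ν2).map Prod.snd = ν2 := by
      rw [Measure.map_snd_prod]; simp
    have h' : Integrable (id : ℝ → ℝ) ((ν1.prod ν2).map Prod.snd) := by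
      rw [hmap, hν2]; exact integrable_id_gaussianReal (β*m1) h2
    exact (integrable_map_measure aestronglyMeasurable_id
      measurable_snd.aemeasurable).mp h'
  have hFint : Integrable F (ν1.prod ν2) := by
    refine (hf2.abs.add (hf1.abs.const_mul |β|)).mono'
      hFmeas.aestronglyMeasurable (Filter.Eventually.of_forall fun p => ?_)
    have hind1 : |ind (p.1/v1 + β*p.2/v2)| ≤ 1 := by
      rw [abs_of_nonneg (hind_nonneg _)]; exact hind_le _
    calc ‖F p‖ = |p.2 - β*p.1| * |ind (p.1/v1 + β*p.2/v2)| := by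
          rw [Real.norm_eq_abs, hF, abs_mul]
      _ ≤ |p.2 - β*p.1| * 1 := mul_le_mul_of_nonneg_left hind1 (abs_nonneg _)
      _ = |p.2 + -(β*p.1)| := by rw [mul_one, sub_eq_add_neg]
      _ ≤ |p.2| + |-(β*p.1)| := abs_add_le _ _
      _ = |p.2| + |β| * |p.1| := by rw [abs_neg, abs_mul]
  -- pointwise factorization
  have hpoint : ∀ x v : ℝ, p1 x * (p2 (v + β*x) * F (x, v + β*x)) = H x v := by
    intro x v
    have harg : x/v1 + β*(v+β*x)/v2 = (1/v1+β^2/v2)*x + (β/v2)*v := by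
      field_simp; ring
    have hsub : v + β*x - β*x = v := by ring
    simp only [hF, hH, hG]
    rw [harg, hsub]
    rw [show p1 x * (p2 (v+β*x) * (v * ind ((1/v1+β^2/v2)*x + (β/v2)*v)))
        = (p1 x * p2 (v+β*x)) * (v * ind ((1/v1+β^2/v2)*x + (β/v2)*v)) from by ring]
    rw [hp1, hp2, gauss_factor h1 h2 m1 x v, ← hpW, ← hpV]
    ring
  -- integrability of G
  have hG_nonneg : ∀ t, 0 ≤ G t := fun t => mul_nonneg (hind_nonneg t) (hpW_nonneg t)
  have hGint : Integrable G := by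
    refine Integrable.mono' (g := pW) (integrable_gaussianPDFReal _ _)
      (hind_meas.mul hpW_meas).aestronglyMeasurable (Filter.Eventually.of_forall fun t => ?_)
    rw [Real.norm_eq_abs, abs_of_nonneg (hG_nonneg t)]
    calc ind t * pW t ≤ 1 * pW t := mul_le_mul_of_nonneg_right (hind_le t) (hpW_nonneg t)
      _ = pW t := one_mul _
  -- integrability of uncurry H on the plane
  have hHmeas : Measurable (Function.uncurry H) := by
    apply Measurable.mul
    · exact measurable_snd.mul ((hpV_meas.comp measurable_snd).const_mul _)
    · exact (hind_meas.mul hpW_meas).comp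
        ((measurable_fst.const_mul _).add (measurable_snd.const_mul _))
  have habs_mul : ∀ v : ℝ, Integrable (fun x => G ((1/v1+β^2/v2)*x + (β/v2)*v)) :=
    fun v => integrable_comp_affine hGint hD.ne' _
  have hVint : Integrable (fun v : ℝ => |v| * pV v) := by
    refine (integrable_id_mul_gaussianPDFReal 0 hsV).abs.congr
      (Filter.Eventually.of_forall fun v => ?_)
    show |v * pV v| = |v| * pV v
    rw [abs_mul, abs_of_nonneg (hpV_nonneg v)]
  have hHint : Integrable (Function.uncurry H) (volume.prod volume) := by
    rw [integrable_prod_iff' hHmeas.aestronglyMeasurable]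
    constructor
    · refine Filter.Eventually.of_forall fun v => ?_
      simp only [Function.uncurry_apply_pair]
      exact (habs_mul v).const_mul (v * ((1/v1+β^2/v2) * pV v))
    · simp only [Function.uncurry_apply_pair]
      have hnorm : ∀ v : ℝ, (∫ x, ‖H x v‖) =
          (|v| * ((1/v1+β^2/v2) * pV v)) * ((|1/v1+β^2/v2|)⁻¹ * ∫ t, G t) := by
        intro v
        have hpt : ∀ x : ℝ, ‖H x v‖ =
            (|v| * ((1/v1+β^2/v2) * pV v)) * G ((1/v1+β^2/v2)*x + (β/v2)*v) := by
          intro x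
          show ‖(v * ((1/v1+β^2/v2) * pV v)) * G ((1/v1+β^2/v2)*x + (β/v2)*v)‖ = _
          rw [Real.norm_eq_abs, abs_mul, abs_mul, abs_mul,
            abs_of_nonneg (hpV_nonneg v), abs_of_nonneg hD.le,
            abs_of_nonneg (hG_nonneg _)]
        have ha : (∫ x, ‖H x v‖)
            = ∫ x, (|v| * ((1/v1+β^2/v2) * pV v)) * G ((1/v1+β^2/v2)*x + (β/v2)*v) :=
          integral_congr_ae (Filter.Eventually.of_forall hpt)
        rw [ha, integral_const_mul, integral_comp_affine G hD.ne']
      refine ((hVint.const_mul ((1/v1+β^2/v2) * ((|1/v1+β^2/v2|)⁻¹ * ∫ t, G t))).congr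
        (Filter.Eventually.of_forall fun v => ?_))
      show ((1/v1+β^2/v2) * ((|1/v1+β^2/v2|)⁻¹ * ∫ t, G t)) * (|v| * pV v) = ∫ x, ‖H x v‖
      rw [hnorm v]; ring
  -- main computation
  calc ∫ p, F p ∂(ν1.prod ν2) = ∫ x, ∫ y, F (x, y) ∂ν2 ∂ν1 := integral_prod F hFint
    _ = ∫ x, (∫ v, p2 (v + β*x) * F (x, v + β*x)) ∂ν1 := by
        refine integral_congr_ae (Filter.Eventually.of_forall fun x => ?_)
        show ∫ y, F (x, y) ∂ν2 = ∫ v, p2 (v + β*x) * F (x, v + β*x)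
        rw [hν2, integral_gaussianReal_eq h2, ← hp2]
        exact (integral_add_right_eq_self (fun y => p2 y * F (x, y)) (β*x)).symm
    _ = ∫ x, p1 x * (∫ v, p2 (v + β*x) * F (x, v + β*x)) := by
        rw [hν1, integral_gaussianReal_eq h1, ← hp1]
    _ = ∫ x, ∫ v, H x v := by
        refine integral_congr_ae (Filter.Eventually.of_forall fun x => ?_)
        show p1 x * (∫ v, p2 (v + β*x) * F (x, v + β*x)) = ∫ v, H x v
        rw [← integral_const_mul]
        exact integral_congr_ae (Filter.Eventually.of_forall fun v => hpoint x v)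
    _ = ∫ v, ∫ x, H x v := integral_integral_swap hHint
    _ = ∫ v, (v * ((1/v1+β^2/v2) * pV v)) * ((|1/v1+β^2/v2|)⁻¹ * ∫ t, G t) := by
        refine integral_congr_ae (Filter.Eventually.of_forall fun v => ?_)
        show ∫ x, (v * ((1/v1+β^2/v2) * pV v)) * G ((1/v1+β^2/v2)*x + (β/v2)*v)
            = (v * ((1/v1+β^2/v2) * pV v)) * ((|1/v1+β^2/v2|)⁻¹ * ∫ t, G t)
        rw [integral_const_mul, integral_comp_affine G hD.ne']
    _ = ((1/v1+β^2/v2) * ((|1/v1+β^2/v2|)⁻¹ * ∫ t, G t)) * ∫ v, v * pV v := by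
        rw [show (((1/v1+β^2/v2) * ((|1/v1+β^2/v2|)⁻¹ * ∫ t, G t)) * ∫ v, v * pV v)
            = ∫ v, ((1/v1+β^2/v2) * ((|1/v1+β^2/v2|)⁻¹ * ∫ t, G t)) * (v * pV v)
          from (integral_const_mul _ _).symm]
        refine integral_congr_ae (Filter.Eventually.of_forall fun v => ?_)
        show (v * ((1/v1+β^2/v2) * pV v)) * ((|1/v1+β^2/v2|)⁻¹ * ∫ t, G t)
            = ((1/v1+β^2/v2) * ((|1/v1+β^2/v2|)⁻¹ * ∫ t, G t)) * (v * pV v)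
        ring
    _ = 0 := by rw [hpV, integral_id_mul_centered_gaussianPDFReal, mul_zero]

end Helpers

/-- **The conditional score.** In the model where `γ̂ ~ N(γ, σ_X²)` and `Γ̂ ~ N(βγ, σ_Y²)` are
independent, the score of `β` is `S(β,γ) = γ(Γ̂ - βγ)/σ_Y²` and
`W(β) = γ̂/σ_X² + βΓ̂/σ_Y²`. Then almost surely
`S(β,γ) - E[S(β,γ) | W(β)] = γ(Γ̂ - βγ̂)/(β²σ_X² + σ_Y²)`. -/
theorem conditional_score_eq
    {Ω : Type*} [MeasurableSpace Ω] (μ : Measure Ω) [IsProbabilityMeasure μ]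
    (γhat Γhat : Ω → ℝ) (hγhat : Measurable γhat) (hΓhat : Measurable Γhat)
    (β γ σX σY : ℝ) (hσX : 0 < σX) (hσY : 0 < σY)
    (hγlaw : μ.map γhat = gaussianReal γ (Real.toNNReal (σX ^ 2)))
    (hΓlaw : μ.map Γhat = gaussianReal (β * γ) (Real.toNNReal (σY ^ 2)))
    (hindep : IndepFun γhat Γhat μ) :
    (fun ω => γ * (Γhat ω - β * γ) / σY ^ 2)
        - μ[fun ω => γ * (Γhat ω - β * γ) / σY ^ 2
            | MeasurableSpace.comap (fun ω => γhat ω / σX ^ 2 + β * Γhat ω / σY ^ 2)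
                inferInstance]
      =ᵐ[μ] fun ω => γ * (Γhat ω - β * γhat ω) / (β ^ 2 * σX ^ 2 + σY ^ 2) := by
  have hv1 : 0 < σX^2 := by positivity
  have hv2 : 0 < σY^2 := by positivity
  have hD : 0 < 1/σX^2 + β^2/σY^2 := by positivity
  have hsV : 0 < β^2*σX^2 + σY^2 := by positivity
  set W : Ω → ℝ := fun ω => γhat ω / σX ^ 2 + β * Γhat ω / σY ^ 2 with hWdef
  have hWmeas : Measurable W := (hγhat.div_const _).add ((hΓhat.const_mul β).div_const _)
  have hm : MeasurableSpace.comap W inferInstance ≤ ‹MeasurableSpace Ω› := hWmeas.comap_le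
  set S : Ω → ℝ := fun ω => γ * (Γhat ω - β * γ) / σY ^ 2 with hSdef
  set gW : Ω → ℝ := fun ω => γ * (β * W ω / (1/σX^2 + β^2/σY^2) - β * γ) / σY ^ 2 with hgWdef
  -- integrability
  have hΓint : Integrable Γhat μ := by
    have h' : Integrable (id : ℝ → ℝ) (μ.map Γhat) := by
      rw [hΓlaw]; exact integrable_id_gaussianReal (β*γ) hv2
    exact (integrable_map_measure aestronglyMeasurable_id hΓhat.aemeasurable).mp h'
  have hγint : Integrable γhat μ := by
    have h' : Integrable (id : ℝ → ℝ) (μ.map γhat) := by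
      rw [hγlaw]; exact integrable_id_gaussianReal γ hv1
    exact (integrable_map_measure aestronglyMeasurable_id hγhat.aemeasurable).mp h'
  have hWint : Integrable W μ := (hγint.div_const _).add ((hΓint.const_mul β).div_const _)
  have hSint : Integrable S μ := by
    refine ((hΓint.const_mul (γ/σY^2)).sub (integrable_const (γ*β*γ/σY^2))).congr
      (Filter.Eventually.of_forall fun ω => ?_)
    show γ/σY^2 * Γhat ω - γ*β*γ/σY^2 = γ * (Γhat ω - β * γ) / σY ^ 2
    field_simp
  have hgWint : Integrable gW μ := by
    refine ((hWint.const_mul (γ*β/(σY^2*(1/σX^2 + β^2/σY^2)))).sub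
      (integrable_const (γ*β*γ/σY^2))).congr (Filter.Eventually.of_forall fun ω => ?_)
    show γ*β/(σY^2*(1/σX^2 + β^2/σY^2)) * W ω - γ*β*γ/σY^2
        = γ * (β * W ω / (1/σX^2 + β^2/σY^2) - β * γ) / σY ^ 2
    field_simp
  -- pointwise difference identity
  have hpt : ∀ ω, S ω - gW ω
      = (γ/(β^2*σX^2 + σY^2)) * (Γhat ω - β * γhat ω) := by
    intro ω
    show γ * (Γhat ω - β * γ) / σY ^ 2
        - γ * (β * (γhat ω / σX ^ 2 + β * Γhat ω / σY ^ 2) / (1/σX^2 + β^2/σY^2) - β * γ) / σY ^ 2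
      = (γ/(β^2*σX^2 + σY^2)) * (Γhat ω - β * γhat ω)
    field_simp
    ring
  -- the conditional expectation
  have hcond : gW =ᵐ[μ] μ[S | MeasurableSpace.comap W inferInstance] := by
    refine ae_eq_condExp_of_forall_setIntegral_eq hm hSint
      (fun s _ _ => hgWint.integrableOn) (fun s hs _ => ?_) ?_
    · obtain ⟨B, hB, rfl⟩ := hs
      have hmeas_s : MeasurableSet (W ⁻¹' B) := hWmeas hB
      have hsub := integral_sub (hSint.integrableOn (s := W ⁻¹' B))
        (hgWint.integrableOn (s := W ⁻¹' B))
      have hkey : ∫ ω in W ⁻¹' B, (S ω - gW ω) ∂μ = 0 := by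
        have hind : Set.indicator (W ⁻¹' B)
              (fun ω => (γ/(β^2*σX^2 + σY^2)) * (Γhat ω - β * γhat ω))
            = fun ω => (γ/(β^2*σX^2 + σY^2)) * ((Γhat ω - β * γhat ω)
                * Set.indicator B (fun _ => (1:ℝ)) (W ω)) := by
          funext ω
          by_cases h : W ω ∈ B
          · simp [Set.indicator_of_mem, h, Set.mem_preimage.mpr h]
          · simp [Set.indicator_of_notMem, h]
        calc ∫ ω in W ⁻¹' B, (S ω - gW ω) ∂μ
            = ∫ ω in W ⁻¹' B, (γ/(β^2*σX^2 + σY^2)) * (Γhat ω - β * γhat ω) ∂μ := by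
              refine integral_congr_ae (Filter.Eventually.of_forall fun ω => ?_)
              exact hpt ω
          _ = ∫ ω, (γ/(β^2*σX^2 + σY^2)) * ((Γhat ω - β * γhat ω)
                * Set.indicator B (fun _ => (1:ℝ)) (W ω)) ∂μ := by
              rw [← integral_indicator hmeas_s, hind]
          _ = (γ/(β^2*σX^2 + σY^2)) * ∫ ω, (Γhat ω - β * γhat ω)
                * Set.indicator B (fun _ => (1:ℝ)) (W ω) ∂μ := integral_const_mul _ _
          _ = 0 := by
              have hpairmeas : Measurable (fun ω => (γhat ω, Γhat ω)) := hγhat.prodMk hΓhat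
              have hpair : μ.map (fun ω => (γhat ω, Γhat ω))
                  = (gaussianReal γ (Real.toNNReal (σX^2))).prod
                      (gaussianReal (β*γ) (Real.toNNReal (σY^2))) := by
                rw [← hγlaw, ← hΓlaw]
                exact (indepFun_iff_map_prod_eq_prod_map_map hγhat.aemeasurable
                  hΓhat.aemeasurable).mp hindep
              have hintmeas : Measurable (fun p : ℝ × ℝ =>
                  (p.2 - β * p.1) * Set.indicator B (fun _ => (1:ℝ)) (p.1/σX^2 + β*p.2/σY^2)) :=
                (measurable_snd.sub (measurable_fst.const_mul β)).mul
                  ((measurable_const.indicator hB).comp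
                    ((measurable_fst.div_const _).add ((measurable_snd.const_mul β).div_const _)))
              have hmap : ∫ ω, (Γhat ω - β * γhat ω)
                    * Set.indicator B (fun _ => (1:ℝ)) (W ω) ∂μ
                  = ∫ p : ℝ × ℝ, (p.2 - β * p.1)
                      * Set.indicator B (fun _ => (1:ℝ)) (p.1/σX^2 + β*p.2/σY^2)
                      ∂(μ.map (fun ω => (γhat ω, Γhat ω))) := by
                rw [integral_map hpairmeas.aemeasurable hintmeas.aestronglyMeasurable]
              rw [hmap, hpair, key_integral hv1 hv2 γ hB, mul_zero]
      have : ∫ ω in W ⁻¹' B, S ω ∂μ - ∫ ω in W ⁻¹' B, gW ω ∂μ = 0 := by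
        rw [← hkey]; exact hsub.symm
      linarith
    · have hWm : Measurable[MeasurableSpace.comap W inferInstance] W := by
        exact Measurable.of_comap_le le_rfl
      have hgm : Measurable (fun w : ℝ => γ * (β * w / (1/σX^2 + β^2/σY^2) - β * γ) / σY ^ 2) := by
        fun_prop
      exact (((hgm.comp hWm).stronglyMeasurable)).aestronglyMeasurable
  -- conclude
  filter_upwards [hcond] with ω hω
  have h1 : (fun ω => γ * (Γhat ω - β * γ) / σY ^ 2) ω
      - (μ[S | MeasurableSpace.comap W inferInstance]) ω = S ω - gW ω := by
    rw [← hω]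
  rw [Pi.sub_apply]
  rw [h1, hpt ω]
  show (γ/(β^2*σX^2 + σY^2)) * (Γhat ω - β * γhat ω)
      = γ * (Γhat ω - β * γhat ω) / (β ^ 2 * σX ^ 2 + σY ^ 2)
  field_simp
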